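/- Let (e₁,…,e₆) be the standard basis of ℂ⁶, ν = e₁∧e₂∧e₃∧e₄∧e₅∧e₆ ∈ Λ⁶ℂ⁶, and let Ω be the bilinear form on Λ³ℂ⁶ determined by v ∧ w = Ω(v,w)·ν. Then the subspace T := span{eᵢ∧eⱼ∧eₖ : i<j<k, #({i,j,k} ∩ {1,2,3}) ≥ 2} of Λ³ℂ⁶ is 10-dimensional and totally isotropic for Ω, i.e., Ω(v,w) = 0 for all v, w ∈ T. (T is the tangent space at e₁∧e₂∧e₃ to the cone of nonzero decomposable 3-vectors in Λ³ℂ⁶; hence this cone is Lagrangian for the symplectic form Ω.) -/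

import Mathlib

/-!
STATEMENT 14: Let `(e₁,…,e₆)` be the standard basis of `ℂ⁶`, `ν = e₁∧⋯∧e₆ ∈ Λ⁶ℂ⁶`,
and let `Ω` be the bilinear form on `Λ³ℂ⁶` determined by `v ∧ w = Ω(v,w)·ν`.
Then the subspace `T = span{eᵢ∧eⱼ∧eₖ : i<j<k, #({i,j,k} ∩ {1,2,3}) ≥ 2}` of `Λ³ℂ⁶`
is 10-dimensional and totally isotropic for `Ω`.
(Indices are shifted to `0,…,5`; `Λ•ℂ⁶` is realised inside the exterior algebra of `ℂ⁶`,
with wedge product the algebra multiplication.)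
-/

noncomputable section

namespace Stmt14

abbrev A := ExteriorAlgebra ℂ (Fin 6 → ℂ)

/-- The basis vectors `eᵢ` of `ℂ⁶` inside the exterior algebra. -/
def e (i : Fin 6) : A := ExteriorAlgebra.ι ℂ (Pi.single i (1 : ℂ))

/-- `ν = e₁∧e₂∧e₃∧e₄∧e₅∧e₆`. -/
def ν : A := e 0 * e 1 * e 2 * e 3 * e 4 * e 5

/-- The span `T` of the decomposable three-vectors `eᵢ∧eⱼ∧eₖ`, `i<j<k`, with at least two
indices among `{1,2,3}` (i.e. `{0,1,2}` in shifted indexing). -/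
def T : Submodule ℂ A :=
  Submodule.span ℂ
    {x : A | ∃ i j k : Fin 6, i < j ∧ j < k ∧
      2 ≤ (({i, j, k} : Finset (Fin 6)) ∩ ({0, 1, 2} : Finset (Fin 6))).card ∧
      x = e i * e j * e k}

open ExteriorAlgebra

lemma iM3 (v : Fin 3 → (Fin 6 → ℂ)) :
    ιMulti ℂ 3 v = ι ℂ (v 0) * ι ℂ (v 1) * ι ℂ (v 2) := by
  simp [ιMulti_apply, List.ofFn_succ, mul_assoc, Matrix.vecTail, Function.comp]

lemma iM6 (v : Fin 6 → (Fin 6 → ℂ)) :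
    ιMulti ℂ 6 v = ι ℂ (v 0) * ι ℂ (v 1) * ι ℂ (v 2) * ι ℂ (v 3) * ι ℂ (v 4) * ι ℂ (v 5) := by
  simp [ιMulti_apply, List.ofFn_succ, mul_assoc, Matrix.vecTail, Function.comp]

def idx : Fin 10 → Fin 3 → Fin 6 :=
  ![![0,1,2], ![0,1,3], ![0,1,4], ![0,1,5], ![0,2,3], ![0,2,4], ![0,2,5],
    ![1,2,3], ![1,2,4], ![1,2,5]]

def g (t : Fin 10) : A := e (idx t 0) * e (idx t 1) * e (idx t 2)

lemma g_eq (t : Fin 10) : g t = ιMulti ℂ 3 (fun r => Pi.single (idx t r) (1 : ℂ)) := by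
  rw [iM3]; rfl

lemma six_zero (a : Fin 6 → Fin 6) (h : ∃ p q : Fin 6, p ≠ q ∧ a p = a q) :
    e (a 0) * e (a 1) * e (a 2) * e (a 3) * e (a 4) * e (a 5) = 0 := by
  obtain ⟨p, q, hpq, hp⟩ := h
  have hv : (fun m => (Pi.single (a m) (1 : ℂ) : Fin 6 → ℂ)) p
      = (fun m => (Pi.single (a m) (1 : ℂ) : Fin 6 → ℂ)) q := by
    simp only; rw [hp]
  have := (ιMulti ℂ 6).map_eq_zero_of_eq
    (fun m => (Pi.single (a m) (1 : ℂ) : Fin 6 → ℂ)) hv hpq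
  rw [iM6] at this
  exact this

def c6 (s t : Fin 10) : Fin 6 → Fin 6 :=
  ![idx s 0, idx s 1, idx s 2, idx t 0, idx t 1, idx t 2]

set_option maxHeartbeats 1000000 in
lemma c6_rep : ∀ s t : Fin 10, ∃ p q : Fin 6, p ≠ q ∧ c6 s t p = c6 s t q := by decide

lemma g_mul_g (s t : Fin 10) : g s * g t = 0 := by
  have h := six_zero (c6 s t) (c6_rep s t)
  have e0 : c6 s t 0 = idx s 0 := rfl
  have e1 : c6 s t 1 = idx s 1 := rfl
  have e2 : c6 s t 2 = idx s 2 := rfl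
  have e3 : c6 s t 3 = idx t 0 := rfl
  have e4 : c6 s t 4 = idx t 1 := rfl
  have e5 : c6 s t 5 = idx t 2 := rfl
  rw [e0, e1, e2, e3, e4, e5] at h
  simp only [g, mul_assoc] at h ⊢
  exact h

def f3 (t : Fin 10) : (Fin 6 → ℂ) [⋀^Fin 3]→ₗ[ℂ] ℂ :=
  (Matrix.detRowAlternating (n := Fin 3)).compLinearMap
    (LinearMap.pi fun r => LinearMap.proj (idx t r))

lemma f3_apply (t : Fin 10) (v : Fin 3 → Fin 6 → ℂ) :
    f3 t v = Matrix.det (Matrix.of fun r c => v r (idx t c)) := rfl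

def φ (t : Fin 10) : A →ₗ[ℂ] ℂ :=
  liftAlternating (R := ℂ) (Function.update (fun _ => 0) 3 (f3 t))

set_option maxHeartbeats 2000000 in
lemma φ_g (s t : Fin 10) : φ t (g s) = if s = t then 1 else 0 := by
  rw [g_eq, φ, liftAlternating_apply_ιMulti, Function.update_self, f3_apply]
  fin_cases s <;> fin_cases t <;>
    simp (config := { decide := true }) [idx, Matrix.det_fin_three, Pi.single_apply,
      Matrix.of_apply]

lemma g_li : LinearIndependent ℂ g := by
  rw [Fintype.linearIndependent_iff]
  intro c hc t
  have h := congrArg (φ t) hc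
  rw [map_sum, map_zero] at h
  simp only [map_smul, φ_g, smul_eq_mul, mul_ite, mul_one, mul_zero] at h
  rwa [Finset.sum_ite_eq' Finset.univ t c, if_pos (Finset.mem_univ t)] at h

lemma T_eq : T = Submodule.span ℂ (Set.range g) := by
  unfold T
  congr 1
  ext x
  constructor
  · rintro ⟨i, j, k, hij, hjk, hcard, rfl⟩
    have : ∃ t : Fin 10, idx t 0 = i ∧ idx t 1 = j ∧ idx t 2 = k := by
      revert hij hjk hcard
      fin_cases i <;> fin_cases j <;> fin_cases k <;> decide
    obtain ⟨t, h0, h1, h2⟩ := this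
    exact ⟨t, by rw [g, h0, h1, h2]⟩
  · rintro ⟨t, rfl⟩
    refine ⟨idx t 0, idx t 1, idx t 2, ?_, ?_, ?_, rfl⟩ <;> revert t <;> decide

set_option maxRecDepth 10000 in
lemma nu_ne : ν ≠ 0 := by
  intro h
  have hν : ν = ιMulti ℂ 6 (fun m => Pi.single (m : Fin 6) (1 : ℂ)) := by
    rw [iM6]; rfl
  have h2 := congrArg (liftAlternating (R := ℂ)
    (Function.update (fun _ => 0) 6 (Matrix.detRowAlternating (n := Fin 6)))) h
  rw [hν, liftAlternating_apply_ιMulti, Function.update_self, map_zero] at h2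
  have hm : (fun m : Fin 6 => (Pi.single m (1 : ℂ) : Fin 6 → ℂ))
      = (1 : Matrix (Fin 6) (Fin 6) ℂ) := by
    ext a b
    simp [Matrix.one_apply, Pi.single_apply, eq_comm]
  rw [hm] at h2
  have h3 : Matrix.det (1 : Matrix (Fin 6) (Fin 6) ℂ) = 0 := by
    unfold Matrix.det; exact h2
  rw [Matrix.det_one] at h3
  exact one_ne_zero h3

end Stmt14

open Stmt14 in
theorem stmt14 :
    -- `T` is a 10-dimensional subspace of `Λ³ℂ⁶`
    Module.finrank ℂ T = 10 ∧
    T ≤ ⋀[ℂ]^3 (Fin 6 → ℂ) ∧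
    -- `T` is totally isotropic for the symplectic form `Ω` defined by `v ∧ w = Ω(v,w)·ν`
    (∀ Ω : A → A → ℂ,
      (∀ v w : A, v ∈ ⋀[ℂ]^3 (Fin 6 → ℂ) → w ∈ ⋀[ℂ]^3 (Fin 6 → ℂ) →
        v * w = Ω v w • ν) →
      ∀ v w : A, v ∈ T → w ∈ T → Ω v w = 0) := by
  have hT3 : T ≤ ⋀[ℂ]^3 (Fin 6 → ℂ) := by
    rw [T_eq, Submodule.span_le]
    rintro x ⟨t, rfl⟩
    rw [g_eq]
    exact ExteriorAlgebra.ιMulti_range ℂ 3 ⟨_, rfl⟩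
  refine ⟨?_, hT3, ?_⟩
  · rw [T_eq, finrank_span_eq_card g_li]
    simp
  · intro Ω hΩ v w hv hw
    have hvw : v * w = 0 := by
      rw [T_eq] at hv hw
      induction hv, hw using Submodule.span_induction₂ with
      | mem_mem x y hx hy =>
        obtain ⟨s, rfl⟩ := hx; obtain ⟨t, rfl⟩ := hy; exact g_mul_g s t
      | zero_left y hy => simp
      | zero_right x hx => simp
      | add_left x y z hx hy hz h1 h2 => rw [add_mul, h1, h2, add_zero]
      | add_right x y z hx hy hz h1 h2 => rw [mul_add, h1, h2, add_zero]
      | smul_left r x y hx hy h1 => rw [smul_mul_assoc, h1, smul_zero]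
      | smul_right r x y hx hy h1 => rw [mul_smul_comm, h1, smul_zero]
    have h0 := hΩ v w (hT3 hv) (hT3 hw)
    rw [hvw] at h0
    rcases smul_eq_zero.mp h0.symm with h | h
    · exact h
    · exact absurd h nu_ne
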